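/- Let γ > 0 and let T be a real symmetric positive semidefinite matrix with operator norm strictly less than γ. Then I - γ⁻¹ T is invertible, and M := (I - γ⁻¹ T)⁻² is the unique symmetric positive definite matrix satisfying the first-order condition M^{-1/2} - I + γ⁻¹ T = 0, i.e. sqrt(M)⁻¹ = I - γ⁻¹ T. -/

import Mathlib

open scoped Matrix.Norms.L2Operator

section

open scoped ComplexOrder

/-- The positive semidefinite square root of a positive semidefinite matrix
(the definition `Matrix.PosSemidef.sqrt` of the older Mathlib, since removed). -/
noncomputable def Matrix.PosSemidef.sqrt {n 𝕜 : Type*} [Fintype n] [RCLike 𝕜] [DecidableEq n]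
    {A : Matrix n n 𝕜} (hA : A.PosSemidef) : Matrix n n 𝕜 :=
  hA.1.eigenvectorUnitary.1 * Matrix.diagonal ((↑) ∘ (√·) ∘ hA.1.eigenvalues) *
  (star hA.1.eigenvectorUnitary : Matrix n n 𝕜)

end

open scoped Matrix

section

open scoped MatrixOrder

lemma Matrix.PosSemidef.sqrt_eq_cfcSqrt {n : Type*} [Fintype n] [DecidableEq n]
    {A : Matrix n n ℝ} (hA : A.PosSemidef) : hA.sqrt = CFC.sqrt A := by
  rw [CFC.sqrt_eq_cfc, cfc_nnreal_eq_real _ A hA.nonneg, hA.1.cfc_eq]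
  simp only [Matrix.IsHermitian.cfc, Matrix.PosSemidef.sqrt, Real.coe_sqrt, Real.coe_toNNReal']
  simp [Unitary.conjStarAlgAut_apply, Function.comp_def, Real.sqrt_eq_zero', hA.eigenvalues_nonneg]

lemma Matrix.PosSemidef.posSemidef_sqrt {n : Type*} [Fintype n] [DecidableEq n]
    {A : Matrix n n ℝ} (hA : A.PosSemidef) : hA.sqrt.PosSemidef := by
  rw [hA.sqrt_eq_cfcSqrt]; exact Matrix.nonneg_iff_posSemidef.mp (CFC.sqrt_nonneg A)

lemma Matrix.PosSemidef.sq_sqrt {n : Type*} [Fintype n] [DecidableEq n]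
    {A : Matrix n n ℝ} (hA : A.PosSemidef) : hA.sqrt ^ 2 = A := by
  rw [hA.sqrt_eq_cfcSqrt]; exact CFC.sq_sqrt A hA.nonneg

lemma Matrix.PosSemidef.eq_sqrt_of_sq_eq {n : Type*} [Fintype n] [DecidableEq n]
    {A : Matrix n n ℝ} (hA : A.PosSemidef) {B : Matrix n n ℝ} (hB : B.PosSemidef)
    (hAB : A ^ 2 = B) : A = hB.sqrt := by
  rw [hB.sqrt_eq_cfcSqrt]
  exact (CFC.sqrt_unique (by rw [← sq]; exact hAB) hA.nonneg).symm

end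

lemma posDef_one_sub_smul {n : ℕ} (γ : ℝ) (hγ : 0 < γ)
    (T : Matrix (Fin n) (Fin n) ℝ) (hT : T.PosSemidef) (hnorm : ‖T‖ < γ) :
    ((1 : Matrix (Fin n) (Fin n) ℝ) - γ⁻¹ • T).PosDef := by
  refine Matrix.PosDef.of_dotProduct_mulVec_pos ?_ ?_
  · show ((1 : Matrix (Fin n) (Fin n) ℝ) - γ⁻¹ • T)ᴴ = _
    rw [Matrix.conjTranspose_sub, Matrix.conjTranspose_smul, Matrix.conjTranspose_one, hT.1.eq]
    simp [star]
  · intro x hx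
    have hxE : ((WithLp.equiv 2 (Fin n → ℝ)).symm x : EuclideanSpace ℝ (Fin n)) ≠ 0 := by
      simpa using hx
    set xE : EuclideanSpace ℝ (Fin n) := (WithLp.equiv 2 (Fin n → ℝ)).symm x
    have hxnorm : 0 < ‖xE‖ := norm_pos_iff.mpr hxE
    have key : dotProduct x (T *ᵥ x) ≤ ‖T‖ * ‖xE‖ ^ 2 := by
      have h1 : dotProduct x (T *ᵥ x)
          = @inner ℝ _ _ xE ((WithLp.equiv 2 (Fin n → ℝ)).symm (T *ᵥ x)) := by
        rw [EuclideanSpace.inner_eq_star_dotProduct]; simp [dotProduct_comm, xE]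
      have h2 := T.l2_opNorm_mulVec xE
      have h3 : @inner ℝ _ _ xE ((WithLp.equiv 2 (Fin n → ℝ)).symm (T *ᵥ x))
          ≤ ‖xE‖ * ‖((WithLp.equiv 2 (Fin n → ℝ)).symm (T *ᵥ x) : EuclideanSpace ℝ (Fin n))‖ :=
        real_inner_le_norm _ _
      have h4 : (T *ᵥ (xE : Fin n → ℝ)) = T *ᵥ x := rfl
      calc dotProduct x (T *ᵥ x)
          ≤ ‖xE‖ * ‖((WithLp.equiv 2 (Fin n → ℝ)).symm (T *ᵥ x) : EuclideanSpace ℝ (Fin n))‖ := by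
            rw [h1]; exact h3
        _ ≤ ‖xE‖ * (‖T‖ * ‖xE‖) := by
            refine mul_le_mul_of_nonneg_left ?_ (norm_nonneg _)
            simpa [h4] using h2
        _ = ‖T‖ * ‖xE‖ ^ 2 := by ring
    have hdot : dotProduct x x = ‖xE‖ ^ 2 := by
      rw [← real_inner_self_eq_norm_sq]
      rw [EuclideanSpace.inner_eq_star_dotProduct]
      simp [xE]
    have hexp : dotProduct (star x) (((1 : Matrix (Fin n) (Fin n) ℝ) - γ⁻¹ • T) *ᵥ x)
        = dotProduct x x - γ⁻¹ * dotProduct x (T *ᵥ x) := by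
      simp [Matrix.sub_mulVec, dotProduct_sub, Matrix.smul_mulVec,
        dotProduct_smul, smul_eq_mul, star]
    rw [hexp, hdot]
    have : γ⁻¹ * dotProduct x (T *ᵥ x) < ‖xE‖ ^ 2 := by
      calc γ⁻¹ * dotProduct x (T *ᵥ x) ≤ γ⁻¹ * (‖T‖ * ‖xE‖ ^ 2) := by
            exact mul_le_mul_of_nonneg_left key (by positivity)
        _ < γ⁻¹ * (γ * ‖xE‖ ^ 2) := by
            refine mul_lt_mul_of_pos_left ?_ (by positivity)
            exact mul_lt_mul_of_pos_right hnorm (by positivity)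
        _ = ‖xE‖ ^ 2 := by field_simp
    linarith

lemma posDef_sq {n : ℕ} {B : Matrix (Fin n) (Fin n) ℝ} (hB : B.PosDef) :
    (B ^ 2).PosDef := by
  refine Matrix.PosDef.of_dotProduct_mulVec_pos (hB.1.pow 2) fun x hx => ?_
  have hBx : B *ᵥ x ≠ 0 := by
    intro h
    have := hB.isUnit
    have hinv : B⁻¹ * B = 1 := Matrix.nonsing_inv_mul B ((Matrix.isUnit_iff_isUnit_det B).mp this)
    apply hx
    have : B⁻¹ *ᵥ (B *ᵥ x) = x := by
      rw [Matrix.mulVec_mulVec, hinv, Matrix.one_mulVec]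
    rw [h, Matrix.mulVec_zero] at this
    exact this.symm
  have hexp : dotProduct (star x) ((B ^ 2) *ᵥ x)
      = dotProduct (B *ᵥ x) (B *ᵥ x) := by
    rw [pow_two, ← Matrix.mulVec_mulVec, Matrix.dotProduct_mulVec]
    congr 1
    have : star x = x := by simp [star]
    rw [this, ← Matrix.mulVec_transpose]
    have hBt : Bᵀ = B := by
      have h := hB.1.eq
      rw [Matrix.conjTranspose, Matrix.transpose_map] at h
      simp [Matrix.map] at h; exact h
    rw [hBt]
  rw [hexp]
  have hnn : 0 < dotProduct (B *ᵥ x) (B *ᵥ x) := by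
    rcases lt_or_eq_of_le (Finset.sum_nonneg fun i _ => mul_self_nonneg ((B *ᵥ x) i)) with h | h
    · exact h
    · exact absurd ((dotProduct_self_eq_zero).mp h.symm) hBx
  exact hnn

theorem worst_case_covariance_characterization {n : ℕ} (γ : ℝ) (hγ : 0 < γ)
    (T : Matrix (Fin n) (Fin n) ℝ) (hT : T.PosSemidef) (hnorm : ‖T‖ < γ) :
    IsUnit ((1 : Matrix (Fin n) (Fin n) ℝ) - γ⁻¹ • T) ∧
    ((((1 : Matrix (Fin n) (Fin n) ℝ) - γ⁻¹ • T)⁻¹)^2).PosDef ∧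
    (∀ hM : ((((1 : Matrix (Fin n) (Fin n) ℝ) - γ⁻¹ • T)⁻¹)^2).PosSemidef,
      (hM.sqrt)⁻¹ = 1 - γ⁻¹ • T) ∧
    ∀ (M' : Matrix (Fin n) (Fin n) ℝ) (hM' : M'.PosSemidef), M'.PosDef →
      (hM'.sqrt)⁻¹ = 1 - γ⁻¹ • T →
      M' = (((1 : Matrix (Fin n) (Fin n) ℝ) - γ⁻¹ • T)⁻¹)^2 := by
  set A : Matrix (Fin n) (Fin n) ℝ := 1 - γ⁻¹ • T with hA
  have hApd : A.PosDef := posDef_one_sub_smul γ hγ T hT hnorm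
  have hAunit : IsUnit A := hApd.isUnit
  have hAinv : A⁻¹.PosDef := hApd.inv
  have hsq : ((A⁻¹) ^ 2).PosDef := posDef_sq hAinv
  have hAA : A⁻¹⁻¹ = A := Matrix.nonsing_inv_nonsing_inv A ((Matrix.isUnit_iff_isUnit_det A).mp hAunit)
  refine ⟨hAunit, hsq, fun hM => ?_, fun M' hM' hM'pd hsqrt => ?_⟩
  · have : hM.sqrt = A⁻¹ := (hAinv.posSemidef.eq_sqrt_of_sq_eq hM rfl).symm
    rw [this, hAA]
  · -- sqrt M' is A⁻¹
    have hs := hM'.posSemidef_sqrt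
    have hdet : IsUnit hM'.sqrt.det := by
      have h2 : hM'.sqrt ^ 2 = M' := hM'.sq_sqrt
      have : hM'.sqrt.det ^ 2 = M'.det := by
        rw [← Matrix.det_pow, h2]
      have hd : M'.det ≠ 0 := ne_of_gt hM'pd.det_pos
      apply isUnit_iff_ne_zero.mpr
      intro h0
      rw [h0] at this
      simp at this
      exact hd this.symm
    have hsqrtA : hM'.sqrt = A⁻¹ := by
      have h := congrArg Inv.inv hsqrt
      rwa [Matrix.nonsing_inv_nonsing_inv _ hdet] at h
    rw [← hM'.sq_sqrt, hsqrtA]
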